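/- Derivative bounds for the nonlinear average: Let f be C^2 with 0 < m ≤ f''(w) ≤ M for all w between u and v (u ≠ v). Then the partial derivative ∂a/∂u(u,v) satisfies (1/2)(m/M)^2 ≤ ∂a/∂u(u,v) ≤ (1/2)(M/m)^2, where a(u,v) = (∫_u^v f''(w)·w dw)/(∫_u^v f''(w) dw). -/

import Mathlib

open intervalIntegral MeasureTheory

lemma aux_bounds (g : ℝ → ℝ) (hg : Continuous g) (a b m M : ℝ) (hab : a < b)
    (hb : ∀ w ∈ Set.Icc a b, m ≤ g w ∧ g w ≤ M) :
    (m * (b - a) ≤ (∫ w in a..b, g w) ∧ (∫ w in a..b, g w) ≤ M * (b - a)) ∧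
    (m * (b - a) ^ 2 / 2 ≤ (∫ w in a..b, g w * (w - a)) ∧
      (∫ w in a..b, g w * (w - a)) ≤ M * (b - a) ^ 2 / 2) ∧
    (m * (b - a) ^ 2 / 2 ≤ (∫ w in a..b, g w * (b - w)) ∧
      (∫ w in a..b, g w * (b - w)) ≤ M * (b - a) ^ 2 / 2) := by
  have hgi : IntervalIntegrable g volume a b := hg.intervalIntegrable a b
  have hgi1 : IntervalIntegrable (fun w => g w * (w - a)) volume a b :=
    (hg.mul (continuous_id.sub continuous_const)).intervalIntegrable a b
  have hgi2 : IntervalIntegrable (fun w => g w * (b - w)) volume a b :=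
    (hg.mul (continuous_const.sub continuous_id)).intervalIntegrable a b
  have hc1 : ∀ c : ℝ, IntervalIntegrable (fun w => c * (w - a)) volume a b := fun c =>
    (continuous_const.mul (continuous_id.sub continuous_const)).intervalIntegrable a b
  have hc2 : ∀ c : ℝ, IntervalIntegrable (fun w => c * (b - w)) volume a b := fun c =>
    (continuous_const.mul (continuous_const.sub continuous_id)).intervalIntegrable a b
  have hia : (∫ w in a..b, (w - a)) = (b - a) ^ 2 / 2 := by
    rw [intervalIntegral.integral_sub intervalIntegrable_id intervalIntegrable_const]
    simp [integral_id, intervalIntegral.integral_const]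
    ring
  have hib : (∫ w in a..b, (b - w)) = (b - a) ^ 2 / 2 := by
    rw [intervalIntegral.integral_sub intervalIntegrable_const intervalIntegrable_id]
    simp [integral_id, intervalIntegral.integral_const]
    ring
  have hca : ∀ c : ℝ, (∫ w in a..b, c * (w - a)) = c * (b - a) ^ 2 / 2 := by
    intro c; rw [intervalIntegral.integral_const_mul, hia]; ring
  have hcb : ∀ c : ℝ, (∫ w in a..b, c * (b - w)) = c * (b - a) ^ 2 / 2 := by
    intro c; rw [intervalIntegral.integral_const_mul, hib]; ring
  refine ⟨⟨?_, ?_⟩, ⟨?_, ?_⟩, ⟨?_, ?_⟩⟩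
  · have := intervalIntegral.integral_mono_on hab.le (_root_.intervalIntegrable_const (c := m)) hgi
      (fun x hx => (hb x hx).1)
    simpa [intervalIntegral.integral_const, mul_comm] using this
  · have := intervalIntegral.integral_mono_on hab.le hgi (_root_.intervalIntegrable_const (c := M))
      (fun x hx => (hb x hx).2)
    simpa [intervalIntegral.integral_const, mul_comm] using this
  · have := intervalIntegral.integral_mono_on hab.le (hc1 m) hgi1
      (fun x hx => mul_le_mul_of_nonneg_right (hb x hx).1 (by linarith [hx.1]))
    rwa [hca] at this
  · have := intervalIntegral.integral_mono_on hab.le hgi1 (hc1 M)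
      (fun x hx => mul_le_mul_of_nonneg_right (hb x hx).2 (by linarith [hx.1]))
    rwa [hca] at this
  · have := intervalIntegral.integral_mono_on hab.le (hc2 m) hgi2
      (fun x hx => mul_le_mul_of_nonneg_right (hb x hx).1 (by linarith [hx.2]))
    rwa [hcb] at this
  · have := intervalIntegral.integral_mono_on hab.le hgi2 (hc2 M)
      (fun x hx => mul_le_mul_of_nonneg_right (hb x hx).2 (by linarith [hx.2]))
    rwa [hcb] at this

set_option maxHeartbeats 800000

noncomputable def nlAvg (f : ℝ → ℝ) (u1 u2 : ℝ) : ℝ :=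
  (∫ u in u1..u2, deriv (deriv f) u * u) / (∫ u in u1..u2, deriv (deriv f) u)

theorem nlAvg_deriv_bounds (f : ℝ → ℝ) (hf : ContDiff ℝ 2 f)
    (u v : ℝ) (huv : u ≠ v) (m M : ℝ) (hm : 0 < m) (hmM : m ≤ M)
    (hbound : ∀ w ∈ Set.uIcc u v, m ≤ deriv (deriv f) w ∧ deriv (deriv f) w ≤ M) :
    (1 / 2) * (m / M) ^ 2 ≤ deriv (fun u' => nlAvg f u' v) u ∧
      deriv (fun u' => nlAvg f u' v) u ≤ (1 / 2) * (M / m) ^ 2 := by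
  set g := deriv (deriv f) with hgdef
  have hM : 0 < M := hm.trans_le hmM
  have hgc : Continuous g := by
    have h1 : ContDiff ℝ (1 + 1) f := by exact_mod_cast hf
    exact ((contDiff_succ_iff_deriv.mp h1).2.2).continuous_deriv le_rfl
  have hgw : Continuous (fun w => g w * w) := hgc.mul continuous_id
  set D := ∫ w in u..v, g w with hD
  set N := ∫ w in u..v, g w * w with hN
  set E := ∫ w in u..v, g w * (w - u) with hE
  have hvu : v - u ≠ 0 := sub_ne_zero_of_ne (Ne.symm huv)
  have ht : 0 < (v - u) ^ 2 := lt_of_le_of_ne (sq_nonneg _) (Ne.symm (pow_ne_zero 2 hvu))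
  have hgu : m ≤ g u ∧ g u ≤ M := hbound u Set.left_mem_uIcc
  -- bounds via case analysis
  have key : (m * (v - u) ^ 2 / 2 ≤ E ∧ E ≤ M * (v - u) ^ 2 / 2) ∧
      (m ^ 2 * (v - u) ^ 2 ≤ D ^ 2 ∧ D ^ 2 ≤ M ^ 2 * (v - u) ^ 2) ∧ D ≠ 0 := by
    rcases lt_or_gt_of_ne huv with h | h
    · have hb : ∀ w ∈ Set.Icc u v, m ≤ g w ∧ g w ≤ M := by
        intro w hw; exact hbound w (by rwa [Set.uIcc_of_le h.le])
      obtain ⟨⟨h1, h2⟩, ⟨h3, h4⟩, _⟩ := aux_bounds g hgc u v m M h hb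
      have hpos : 0 < m * (v - u) := mul_pos hm (sub_pos.mpr h)
      refine ⟨⟨h3, h4⟩, ⟨?_, ?_⟩, ?_⟩
      · nlinarith [h1, hpos]
      · nlinarith [h1, hpos]
      · intro h0; rw [hD] at h0; rw [h0] at h1; linarith
    · have hb : ∀ w ∈ Set.Icc v u, m ≤ g w ∧ g w ≤ M := by
        intro w hw; exact hbound w (by rwa [Set.uIcc_of_ge h.le])
      obtain ⟨⟨h1, h2⟩, _, ⟨h5, h6⟩⟩ := aux_bounds g hgc v u m M h hb
      set J := ∫ w in v..u, g w with hJ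
      have hDJ : D = -J := intervalIntegral.integral_symm v u
      have hEJ : E = ∫ w in v..u, g w * (u - w) := by
        rw [hE, intervalIntegral.integral_symm v u, ← intervalIntegral.integral_neg]
        congr 1; funext w; ring
      have hsq : (u - v) ^ 2 = (v - u) ^ 2 := by ring
      have hpos : 0 < m * (u - v) := mul_pos hm (sub_pos.mpr h)
      refine ⟨⟨?_, ?_⟩, ⟨?_, ?_⟩, ?_⟩
      · rw [hEJ]; rw [← hsq]; exact h5
      · rw [hEJ]; rw [← hsq]; exact h6
      · rw [hDJ, neg_sq, ← hsq]
        nlinarith [h1, hpos]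
      · rw [hDJ, neg_sq, ← hsq]
        nlinarith [h1, hpos]
      · rw [hDJ]; intro h0
        have : J = 0 := by linarith [neg_eq_zero.mp h0]
        rw [this] at h1; nlinarith
  obtain ⟨⟨hE1, hE2⟩, ⟨hD1, hD2⟩, hDne⟩ := key
  have hD2pos : 0 < D ^ 2 := lt_of_lt_of_le (by positivity) hD1
  -- derivative computation
  have hdN : HasDerivAt (fun u' => ∫ w in u'..v, g w * w) (-(g u * u)) u :=
    intervalIntegral.integral_hasDerivAt_left (hgw.intervalIntegrable u v)
      (hgw.stronglyMeasurableAtFilter _ _) hgw.continuousAt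
  have hdD : HasDerivAt (fun u' => ∫ w in u'..v, g w) (-(g u)) u :=
    intervalIntegral.integral_hasDerivAt_left (hgc.intervalIntegrable u v)
      (hgc.stronglyMeasurableAtFilter _ _) hgc.continuousAt
  have hdQ : HasDerivAt (fun u' => nlAvg f u' v)
      ((-(g u * u) * D - N * -(g u)) / D ^ 2) u := hdN.div hdD hDne
  have hEeq : E = N - u * D := by
    rw [hE, hN, hD]
    simp_rw [mul_sub]
    rw [intervalIntegral.integral_sub (hgw.intervalIntegrable u v)
      (show IntervalIntegrable (fun w => g w * u) volume u v from (hgc.mul continuous_const).intervalIntegrable u v)]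
    simp_rw [intervalIntegral.integral_mul_const]
    ring
  have hderiv : deriv (fun u' => nlAvg f u' v) u = g u * E / D ^ 2 := by
    rw [hdQ.deriv, hEeq]; ring_nf
  rw [hderiv]
  have hE0 : 0 ≤ E := le_trans (by positivity) hE1
  constructor
  · rw [le_div_iff₀ hD2pos]
    have e1 : (m / M) ^ 2 * (M ^ 2 * (v - u) ^ 2) = m ^ 2 * (v - u) ^ 2 := by
      field_simp
    have e2 : (m / M) ^ 2 * D ^ 2 ≤ (m / M) ^ 2 * (M ^ 2 * (v - u) ^ 2) :=
      mul_le_mul_of_nonneg_left hD2 (by positivity)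
    have e3 : m * (m * (v - u) ^ 2 / 2) ≤ g u * E :=
      mul_le_mul hgu.1 hE1 (by positivity) (hm.le.trans hgu.1)
    linarith [e1, e2, e3]
  · rw [div_le_iff₀ hD2pos]
    have e1 : (M / m) ^ 2 * (m ^ 2 * (v - u) ^ 2) = M ^ 2 * (v - u) ^ 2 := by
      field_simp
    have e2 : (M / m) ^ 2 * (m ^ 2 * (v - u) ^ 2) ≤ (M / m) ^ 2 * D ^ 2 :=
      mul_le_mul_of_nonneg_left hD1 (by positivity)
    have e3 : g u * E ≤ M * (M * (v - u) ^ 2 / 2) :=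
      mul_le_mul hgu.2 hE2 hE0 hM.le
    linarith [e1, e2, e3]
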